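/- Let r₁, …, r_k : [0,1] → ℝ_{>0} be twice-differentiable functions such that for each e, r_e satisfies r_e'' (λ) = (2/r_e(λ)) (r_e'(λ))² for all λ. Let r_p(λ) = Σ_e r_e(λ). Then r_p(λ)·r_p''(λ) ≥ 2 (r_p'(λ))² for all λ, and consequently c_p(λ) = 1/r_p(λ) is concave on [0,1]. -/

import Mathlib

open Set

theorem stmt_3 (k : ℕ) (r r' r'' : Fin k → ℝ → ℝ)
    (hpos : ∀ e, ∀ l ∈ Icc (0 : ℝ) 1, 0 < r e l)
    (hderiv1 : ∀ e, ∀ l ∈ Icc (0 : ℝ) 1, HasDerivAt (r e) (r' e l) l)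
    (hderiv2 : ∀ e, ∀ l ∈ Icc (0 : ℝ) 1, HasDerivAt (r' e) (r'' e l) l)
    (hode : ∀ e, ∀ l ∈ Icc (0 : ℝ) 1, r'' e l = (2 / r e l) * (r' e l) ^ 2) :
    (∀ l ∈ Icc (0 : ℝ) 1,
        (∑ e, r e l) * (∑ e, r'' e l) ≥ 2 * (∑ e, r' e l) ^ 2) ∧
    ConcaveOn ℝ (Icc (0 : ℝ) 1) (fun l => 1 / (∑ e, r e l)) := by
  -- the key Cauchy–Schwarz inequality
  have key : ∀ l ∈ Icc (0 : ℝ) 1,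
      (∑ e, r e l) * (∑ e, r'' e l) ≥ 2 * (∑ e, r' e l) ^ 2 := by
    intro l hl
    have hS : 0 ≤ ∑ e, r e l := Finset.sum_nonneg fun e _ => (hpos e l hl).le
    have hCS : (∑ e, r' e l) ^ 2 / ∑ e, r e l ≤ ∑ e, (r' e l) ^ 2 / r e l :=
      Finset.sq_sum_div_le_sum_sq_div _ _ (fun e _ => hpos e l hl)
    have hsum : ∑ e, r'' e l = 2 * ∑ e, (r' e l) ^ 2 / r e l := by
      rw [Finset.mul_sum]
      refine Finset.sum_congr rfl fun e _ => ?_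
      rw [hode e l hl]; ring
    rcases eq_or_lt_of_le hS with h0 | h0
    · have h1 : ∀ e ∈ Finset.univ, r e l = 0 → False := fun e _ he =>
        (hpos e l hl).ne' he
      have : ∀ e : Fin k, False := fun e => by
        have := (Finset.sum_eq_zero_iff_of_nonneg
          (fun e _ => (hpos e l hl).le)).mp h0.symm e (Finset.mem_univ e)
        exact (hpos e l hl).ne' this
      have hk : IsEmpty (Fin k) := ⟨this⟩
      simp [Finset.univ_eq_empty]
    · rw [ge_iff_le, hsum]
      have := div_le_iff₀ h0 |>.mp hCS
      nlinarith [this]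
  refine ⟨key, ?_⟩
  rcases isEmpty_or_nonempty (Fin k) with hk | hk
  · simp only [Finset.univ_eq_empty, Finset.sum_empty, div_zero]
    exact concaveOn_const 0 (convex_Icc 0 1)
  -- notation
  set F : ℝ → ℝ := fun l => ∑ e, r e l with hF
  set F' : ℝ → ℝ := fun l => ∑ e, r' e l with hF'
  set F'' : ℝ → ℝ := fun l => ∑ e, r'' e l with hF''
  have hFpos : ∀ l ∈ Icc (0 : ℝ) 1, 0 < F l := fun l hl =>
    Finset.sum_pos (fun e _ => hpos e l hl) Finset.univ_nonempty
  have hDF : ∀ l ∈ Icc (0 : ℝ) 1, HasDerivAt F (F' l) l := fun l hl =>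
    HasDerivAt.fun_sum fun e _ => hderiv1 e l hl
  have hDF' : ∀ l ∈ Icc (0 : ℝ) 1, HasDerivAt F' (F'' l) l := fun l hl =>
    HasDerivAt.fun_sum fun e _ => hderiv2 e l hl
  have hint : interior (Icc (0:ℝ) 1) = Ioo 0 1 := interior_Icc
  have hsub : Ioo (0:ℝ) 1 ⊆ Icc 0 1 := Ioo_subset_Icc_self
  -- derivative of 1/F
  have hG1 : ∀ x ∈ Ioo (0:ℝ) 1,
      HasDerivAt (fun l => 1 / F l) (-F' x / F x ^ 2) x := by
    intro x hx
    have h := ((hasDerivAt_const x (1:ℝ)).fun_div (hDF x (hsub hx))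
      (hFpos x (hsub hx)).ne')
    rw [show -F' x / F x ^ 2 = (0 * F x - 1 * F' x) / F x ^ 2 by ring]
    exact h
  -- derivative of −F'/F²
  have hG2 : ∀ x ∈ Ioo (0:ℝ) 1,
      HasDerivAt (fun l => -F' l / F l ^ 2)
        ((-F'' x * F x ^ 2 - (-F' x) * (2 * F x ^ 1 * F' x)) / (F x ^ 2) ^ 2) x := by
    intro x hx
    exact ((hDF' x (hsub hx)).neg).div ((hDF x (hsub hx)).pow 2)
      (pow_ne_zero 2 (hFpos x (hsub hx)).ne')
  refine concaveOn_of_hasDerivWithinAt2_nonpos (convex_Icc 0 1)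
    ?_ (f' := fun x => -F' x / F x ^ 2)
    (fun x hx => ((hG1 x (hint ▸ hx)).hasDerivWithinAt))
    (fun x hx => ((hG2 x (hint ▸ hx)).hasDerivWithinAt))
    ?_
  · exact ContinuousOn.div continuousOn_const
      (fun x hx => (hDF x hx).continuousAt.continuousWithinAt)
      (fun x hx => (hFpos x hx).ne')
  · intro x hx
    rw [hint] at hx
    have h1 : 0 < F x := hFpos x (hsub hx)
    have h2 : F x * F'' x ≥ 2 * F' x ^ 2 := key x (hsub hx)
    have hnum : -F'' x * F x ^ 2 - (-F' x) * (2 * F x ^ 1 * F' x) ≤ 0 := by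
      nlinarith
    exact div_nonpos_of_nonpos_of_nonneg hnum (by positivity)
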